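/- Let H, H' be complex Hilbert spaces and let Z : H → H' be a continuous linear map admitting parametrices Q and P. Define continuous operators on H × H' by L_Q(u,v) = (u − Q(Z u), Z(Q v) − v) and L_P(u,v) = (u − P(Z u), Z(P v) − v). Then L_Q and L_P are of finite rank, and L_Q − L_P lies in [F(H × H'), F(H × H')]. -/

import Mathlib

/-- A continuous linear map is of finite rank if its range is finite dimensional. -/
def FiniteRank {V W : Type*} [NormedAddCommGroup V] [NormedSpace ℂ V]
    [NormedAddCommGroup W] [NormedSpace ℂ W] (T : V →L[ℂ] W) : Prop :=
  FiniteDimensional ℂ (LinearMap.range (T : V →ₗ[ℂ] W))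

/-- `[F(V), F(V)]`: the additive subgroup of the continuous endomorphisms of `V`
generated by commutators of finite-rank operators. -/
noncomputable def frCommutators (V : Type*) [NormedAddCommGroup V] [NormedSpace ℂ V] :
    AddSubgroup (V →L[ℂ] V) :=
  AddSubgroup.closure
    {C | ∃ A B : V →L[ℂ] V, FiniteRank A ∧ FiniteRank B ∧ C = A.comp B - B.comp A}

/-- `Q` is a parametrix for `Z`: `Q∘Z - id` and `Z∘Q - id` are finite rank. -/
def IsParametrix {H H' : Type*} [NormedAddCommGroup H] [NormedSpace ℂ H]
    [NormedAddCommGroup H'] [NormedSpace ℂ H']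
    (Z : H →L[ℂ] H') (Q : H' →L[ℂ] H) : Prop :=
  FiniteRank (Q.comp Z - ContinuousLinearMap.id ℂ H) ∧
    FiniteRank (Z.comp Q - ContinuousLinearMap.id ℂ H')

/-- The logarithm `L_Q (u, v) = (u − Q(Z u), Z(Q v) − v)` on `H × H'`. -/
noncomputable def Lop {H H' : Type*} [NormedAddCommGroup H] [NormedSpace ℂ H]
    [NormedAddCommGroup H'] [NormedSpace ℂ H']
    (Z : H →L[ℂ] H') (Q : H' →L[ℂ] H) : (H × H') →L[ℂ] (H × H') :=
  ((ContinuousLinearMap.id ℂ H - Q.comp Z).comp (ContinuousLinearMap.fst ℂ H H')).prod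
    ((Z.comp Q - ContinuousLinearMap.id ℂ H').comp (ContinuousLinearMap.snd ℂ H H'))

section Helpers

variable {U V W : Type*} [NormedAddCommGroup U] [NormedSpace ℂ U]
  [NormedAddCommGroup V] [NormedSpace ℂ V] [NormedAddCommGroup W] [NormedSpace ℂ W]

lemma FiniteRank.of_le {T : V →L[ℂ] W} {p : Submodule ℂ W} [FiniteDimensional ℂ p]
    (h : LinearMap.range (T : V →ₗ[ℂ] W) ≤ p) : FiniteRank T :=
  Submodule.finiteDimensional_of_le h

lemma FiniteRank.comp_left {T : V →L[ℂ] W} (h : FiniteRank T) (S : W →L[ℂ] U) :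
    FiniteRank (S.comp T) := by
  have : LinearMap.range ((S.comp T) : V →ₗ[ℂ] U)
      = Submodule.map (S : W →ₗ[ℂ] U) (LinearMap.range (T : V →ₗ[ℂ] W)) := by
    rw [← LinearMap.range_comp]; rfl
  unfold FiniteRank at h ⊢
  rw [this]
  haveI := h
  exact Module.Finite.map _ _

lemma FiniteRank.comp_right {T : V →L[ℂ] W} (h : FiniteRank T) (S : U →L[ℂ] V) :
    FiniteRank (T.comp S) := by
  haveI : FiniteDimensional ℂ (LinearMap.range (T : V →ₗ[ℂ] W)) := h
  exact FiniteRank.of_le (p := LinearMap.range (T : V →ₗ[ℂ] W)) (by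
    rintro x ⟨y, rfl⟩; exact ⟨S y, rfl⟩)

lemma FiniteRank.add {T S : V →L[ℂ] W} (hT : FiniteRank T) (hS : FiniteRank S) :
    FiniteRank (T + S) := by
  haveI h1 : FiniteDimensional ℂ (LinearMap.range (T : V →ₗ[ℂ] W)) := hT
  haveI h2 : FiniteDimensional ℂ (LinearMap.range (S : V →ₗ[ℂ] W)) := hS
  exact FiniteRank.of_le
    (p := LinearMap.range (T : V →ₗ[ℂ] W) ⊔ LinearMap.range (S : V →ₗ[ℂ] W)) (by
      rintro x ⟨y, rfl⟩
      exact Submodule.add_mem _ (Submodule.mem_sup_left ⟨y, rfl⟩)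
        (Submodule.mem_sup_right ⟨y, rfl⟩))

lemma FiniteRank.neg {T : V →L[ℂ] W} (hT : FiniteRank T) : FiniteRank (-T) := by
  haveI h1 : FiniteDimensional ℂ (LinearMap.range (T : V →ₗ[ℂ] W)) := hT
  exact FiniteRank.of_le (p := LinearMap.range (T : V →ₗ[ℂ] W)) (by
    rintro x ⟨y, rfl⟩; exact ⟨-y, by simp⟩)

lemma FiniteRank.sub {T S : V →L[ℂ] W} (hT : FiniteRank T) (hS : FiniteRank S) :
    FiniteRank (T - S) := by
  rw [sub_eq_add_neg]; exact hT.add hS.neg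

lemma FiniteRank.prod {T : U →L[ℂ] V} {S : U →L[ℂ] W}
    (hT : FiniteRank T) (hS : FiniteRank S) : FiniteRank (T.prod S) := by
  haveI h1 : FiniteDimensional ℂ (LinearMap.range (T : U →ₗ[ℂ] V)) := hT
  haveI h2 : FiniteDimensional ℂ (LinearMap.range (S : U →ₗ[ℂ] W)) := hS
  set p := ((LinearMap.range (T : U →ₗ[ℂ] V)).map (LinearMap.inl ℂ V W))
    ⊔ ((LinearMap.range (S : U →ₗ[ℂ] W)).map (LinearMap.inr ℂ V W)) with hp
  haveI : FiniteDimensional ℂ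
      ((LinearMap.range (T : U →ₗ[ℂ] V)).map (LinearMap.inl ℂ V W)) :=
    Module.Finite.map _ _
  haveI : FiniteDimensional ℂ
      ((LinearMap.range (S : U →ₗ[ℂ] W)).map (LinearMap.inr ℂ V W)) :=
    Module.Finite.map _ _
  haveI : FiniteDimensional ℂ p := Submodule.finiteDimensional_sup _ _
  refine FiniteRank.of_le (p := p) ?_
  rintro x ⟨y, rfl⟩
  rw [show ((T.prod S : U →ₗ[ℂ] V × W) y) = (T y, 0) + ((0 : V), S y) by simp]
  exact Submodule.add_mem _
    (Submodule.mem_sup_left ⟨T y, ⟨y, rfl⟩, rfl⟩)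
    (Submodule.mem_sup_right ⟨S y, ⟨y, rfl⟩, rfl⟩)

/-- Key abstract lemma: if `F` is finite rank and there is a finite-rank idempotent `Pr`
with `Pr ∘ F = F = F ∘ Pr`, then the commutator of any bounded `G` with `F` lies in
the subgroup generated by commutators of finite-rank operators. -/
lemma commutator_mem_frCommutators {F G Pr : V →L[ℂ] V} (hF : FiniteRank F)
    (hPrFR : FiniteRank Pr) (hPP : Pr.comp Pr = Pr)
    (hPF : Pr.comp F = F) (hFP : F.comp Pr = F) :
    G.comp F - F.comp G ∈ frCommutators V := by
  set K₀ : V →L[ℂ] V := G.comp F - (Pr.comp G).comp F with hK₀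
  have hK₀FR : FiniteRank K₀ := (hF.comp_left G).sub (hF.comp_left (Pr.comp G))
  have hdecomp : G.comp F - F.comp G
      = ((Pr.comp G).comp F - F.comp (Pr.comp G)) + (K₀.comp Pr - Pr.comp K₀) := by
    have e1 : K₀.comp Pr = K₀ := by
      rw [hK₀, ContinuousLinearMap.sub_comp, ContinuousLinearMap.comp_assoc,
        hFP, ContinuousLinearMap.comp_assoc, ContinuousLinearMap.comp_assoc, hFP,
        ← ContinuousLinearMap.comp_assoc]
    have hPP' : ∀ x, Pr (Pr x) = Pr x := fun x => by
      simpa using DFunLike.congr_fun hPP x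
    have e2 : Pr.comp K₀ = 0 := by
      ext x
      simp [hK₀, map_sub, hPP']
    rw [e1, e2, sub_zero]
    have e3 : F.comp (Pr.comp G) = F.comp G := by
      rw [← ContinuousLinearMap.comp_assoc, hFP]
    rw [e3, hK₀]
    abel
  rw [hdecomp]
  refine AddSubgroup.add_mem _ ?_ ?_
  · exact AddSubgroup.subset_closure ⟨Pr.comp G, F, hPrFR.comp_right G, hF, rfl⟩
  · exact AddSubgroup.subset_closure ⟨K₀, Pr, hK₀FR, hPrFR, rfl⟩

end Helpers

section Proj

variable {U V : Type*}

/-- Orthogonal projection onto the range of a finite-rank operator. -/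
lemma exists_proj_range [NormedAddCommGroup U] [NormedSpace ℂ U]
    [NormedAddCommGroup V] [InnerProductSpace ℂ V]
    {D : U →L[ℂ] V} (hD : FiniteRank D) :
    ∃ Pr : V →L[ℂ] V, FiniteRank Pr ∧ Pr.comp Pr = Pr ∧ ∀ x, Pr (D x) = D x := by
  haveI : FiniteDimensional ℂ (LinearMap.range (D : U →ₗ[ℂ] V)) := hD
  set W : Submodule ℂ V := LinearMap.range (D : U →ₗ[ℂ] V) with hW
  haveI : CompleteSpace W := FiniteDimensional.complete ℂ W
  refine ⟨W.subtypeL.comp (Submodule.orthogonalProjection W), ?_, ?_, ?_⟩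
  · exact FiniteRank.of_le (p := W)
      (by rintro x ⟨y, rfl⟩; exact (Submodule.orthogonalProjection W y).2)
  · ext x
    exact Submodule.starProjection_eq_self_iff.mpr (Submodule.orthogonalProjection W x).2
  · intro x
    exact Submodule.starProjection_eq_self_iff.mpr ⟨x, rfl⟩

/-- Orthogonal projection onto the orthogonal complement of the kernel
of a finite-rank operator. -/
lemma exists_proj_ker [NormedAddCommGroup U] [InnerProductSpace ℂ U] [CompleteSpace U]
    [NormedAddCommGroup V] [NormedSpace ℂ V]
    {D : U →L[ℂ] V} (hD : FiniteRank D) :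
    ∃ Pr : U →L[ℂ] U, FiniteRank Pr ∧ Pr.comp Pr = Pr ∧ ∀ x, D (Pr x) = D x := by
  haveI : FiniteDimensional ℂ (LinearMap.range (D : U →ₗ[ℂ] V)) := hD
  set K : Submodule ℂ U := LinearMap.ker (D : U →ₗ[ℂ] V) with hK
  haveI hKc : CompleteSpace K := (ContinuousLinearMap.isClosed_ker D).completeSpace_coe
  haveI hKorth : FiniteDimensional ℂ (Kᗮ : Submodule ℂ U) := by
    let f : (Kᗮ : Submodule ℂ U) →ₗ[ℂ] LinearMap.range (D : U →ₗ[ℂ] V) :=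
      LinearMap.codRestrict _ ((D : U →ₗ[ℂ] V).comp Kᗮ.subtype)
        (fun x => ⟨x.1, rfl⟩)
    have hf : Function.Injective f := by
      intro x y hxy
      have h0 : D (x.1 - y.1) = 0 := by
        have := congrArg Subtype.val hxy
        simp only [f, LinearMap.codRestrict_apply, LinearMap.comp_apply,
          Submodule.subtype_apply, ContinuousLinearMap.coe_coe] at this
        rw [map_sub]; exact sub_eq_zero.mpr this
      have hmem : x.1 - y.1 ∈ K ⊓ Kᗮ := ⟨h0, Submodule.sub_mem _ x.2 y.2⟩
      have : x.1 - y.1 = 0 := by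
        rwa [K.orthogonal_disjoint.eq_bot, Submodule.mem_bot] at hmem
      exact Subtype.ext (sub_eq_zero.mp this)
    exact FiniteDimensional.of_injective f hf
  set W : Submodule ℂ U := Kᗮ with hW
  haveI : CompleteSpace W := FiniteDimensional.complete ℂ W
  refine ⟨W.subtypeL.comp (Submodule.orthogonalProjection W), ?_, ?_, ?_⟩
  · exact FiniteRank.of_le (p := W)
      (by rintro x ⟨y, rfl⟩; exact (Submodule.orthogonalProjection W y).2)
  · ext x
    exact Submodule.starProjection_eq_self_iff.mpr (Submodule.orthogonalProjection W x).2
  · intro x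
    have hsub : x - (Submodule.orthogonalProjection W x : U) ∈ Wᗮ :=
      Submodule.sub_starProjection_mem_orthogonal x
    have hxK : x - (Submodule.orthogonalProjection W x : U) ∈ K := by
      have h2 : Kᗮᗮ ≤ K := le_of_eq (Submodule.orthogonal_orthogonal K)
      exact h2 hsub
    have h0 : D (x - (Submodule.orthogonalProjection W x : U)) = 0 := hxK
    have := sub_eq_zero.mp (by simpa [map_sub] using h0)
    simpa using this.symm

end Proj

set_option maxHeartbeats 1000000 in
theorem stmt1 {H H' : Type*}
    [NormedAddCommGroup H] [InnerProductSpace ℂ H] [CompleteSpace H]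
    [NormedAddCommGroup H'] [InnerProductSpace ℂ H'] [CompleteSpace H']
    (Z : H →L[ℂ] H') (Q P : H' →L[ℂ] H)
    (hQ : IsParametrix Z Q) (hP : IsParametrix Z P) :
    FiniteRank (Lop Z Q) ∧ FiniteRank (Lop Z P) ∧
      Lop Z Q - Lop Z P ∈ frCommutators (H × H') := by
  obtain ⟨hQ1, hQ2⟩ := hQ
  obtain ⟨hP1, hP2⟩ := hP
  have hLop : ∀ (R : H' →L[ℂ] H), IsParametrix Z R → FiniteRank (Lop Z R) := by
    rintro R ⟨h1, h2⟩
    have h1' : FiniteRank (ContinuousLinearMap.id ℂ H - R.comp Z) := by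
      have := h1.neg
      simpa [neg_sub] using this
    exact (h1'.comp_right _).prod (h2.comp_right _)
  refine ⟨hLop Q ⟨hQ1, hQ2⟩, hLop P ⟨hP1, hP2⟩, ?_⟩
  -- D = Q - P is finite rank
  have hD : FiniteRank (Q - P) := by
    have key : Q - P = ((Q.comp Z - ContinuousLinearMap.id ℂ H).comp P)
        - (Q.comp (Z.comp P - ContinuousLinearMap.id ℂ H')) := by
      ext v
      simp [ContinuousLinearMap.comp_apply, ContinuousLinearMap.sub_apply, map_sub]
    rw [key]
    exact (hQ1.comp_right P).sub (hP2.comp_left Q)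
  -- set up A and B
  set A : (H × H') →L[ℂ] (H × H') :=
    ((Q - P).comp (ContinuousLinearMap.snd ℂ H H')).prod 0 with hA
  set B : (H × H') →L[ℂ] (H × H') :=
    (0 : (H × H') →L[ℂ] H).prod (Z.comp (ContinuousLinearMap.fst ℂ H H')) with hB
  have hAFR : FiniteRank A := by
    have h0 : FiniteRank (0 : (H × H') →L[ℂ] H') := by
      unfold FiniteRank
      rw [show ((0 : (H × H') →L[ℂ] H') : (H × H') →ₗ[ℂ] H') = 0 from rfl,
        LinearMap.range_zero]
      infer_instance
    exact (hD.comp_right _).prod h0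
  -- the projection Pr
  obtain ⟨P₁, hP₁FR, hP₁P₁, hP₁D⟩ := exists_proj_range hD
  obtain ⟨P₂, hP₂FR, hP₂P₂, hDP₂⟩ := exists_proj_ker hD
  set Pr : (H × H') →L[ℂ] (H × H') :=
    (P₁.comp (ContinuousLinearMap.fst ℂ H H')).prod
      (P₂.comp (ContinuousLinearMap.snd ℂ H H')) with hPrdef
  have hP₁P₁' : ∀ x, P₁ (P₁ x) = P₁ x := fun x => by
    simpa using DFunLike.congr_fun hP₁P₁ x
  have hP₂P₂' : ∀ x, P₂ (P₂ x) = P₂ x := fun x => by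
    simpa using DFunLike.congr_fun hP₂P₂ x
  have hPrFR : FiniteRank Pr := (hP₁FR.comp_right _).prod (hP₂FR.comp_right _)
  have hPP : Pr.comp Pr = Pr := by
    ext x <;> simp [hPrdef, hP₁P₁', hP₂P₂']
  have hP₁D' : ∀ x, P₁ (Q x - P x) = Q x - P x := fun x => by simpa using hP₁D x
  have hDP₂' : ∀ x, Q (P₂ x) - P (P₂ x) = Q x - P x := fun x => by simpa using hDP₂ x
  have hPA : Pr.comp A = A := by
    ext x <;> simp [hPrdef, hA, hP₁D']
  have hAP : A.comp Pr = A := by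
    ext x <;> simp [hPrdef, hA, hDP₂']
  have heq : Lop Z Q - Lop Z P = B.comp A - A.comp B := by
    ext x <;>
      simp [Lop, hA, hB, ContinuousLinearMap.comp_apply, ContinuousLinearMap.sub_apply,
        ContinuousLinearMap.prod_apply, map_sub] <;> abel
  rw [heq]
  exact commutator_mem_frCommutators hAFR hPrFR hPP hPA hAP
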